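/- Let L be a Lindblad generator on M_d(ℂ) and G its time average. Then the range of L equals the kernel of G, the kernel of L equals the range of G, M_d(ℂ) is the direct sum of ker L and ker G, and L restricts to a linear bijection of ker G onto itself (so that L has a well-defined inverse L⁻¹ : ker G → ker G). -/

import Mathlib

open Matrix Filter
open scoped ComplexOrder

attribute [local instance] Matrix.frobeniusNormedAddCommGroup Matrix.frobeniusNormedSpace

variable {d : ℕ}

/-- The Lindblad generator built from `H` and Kraus operators `h`. -/
noncomputable def lindbladOf (H : Matrix (Fin d) (Fin d) ℂ) {n : ℕ}
    (h : Fin n → Matrix (Fin d) (Fin d) ℂ) :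
    Matrix (Fin d) (Fin d) ℂ →ₗ[ℂ] Matrix (Fin d) (Fin d) ℂ :=
  (-Complex.I) • (LinearMap.mulLeft ℂ H - LinearMap.mulRight ℂ H) +
    ∑ α, ((LinearMap.mulLeft ℂ (h α)).comp (LinearMap.mulRight ℂ (h α)ᴴ)
      - ((1 : ℂ)/2) • (LinearMap.mulLeft ℂ ((h α)ᴴ * h α) + LinearMap.mulRight ℂ ((h α)ᴴ * h α)))

/-- `L` is a Lindblad generator. -/
def IsLindblad (L : Matrix (Fin d) (Fin d) ℂ →ₗ[ℂ] Matrix (Fin d) (Fin d) ℂ) : Prop :=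
  ∃ (H : Matrix (Fin d) (Fin d) ℂ) (n : ℕ) (h : Fin n → Matrix (Fin d) (Fin d) ℂ),
    H.IsHermitian ∧ L = lindbladOf H h

/-- `exp (t L)` as a map on matrices. -/
noncomputable def expL (L : Matrix (Fin d) (Fin d) ℂ →ₗ[ℂ] Matrix (Fin d) (Fin d) ℂ) (t : ℝ) :
    Matrix (Fin d) (Fin d) ℂ →L[ℂ] Matrix (Fin d) (Fin d) ℂ :=
  haveI : IsTopologicalRing (Matrix (Fin d) (Fin d) ℂ →L[ℂ] Matrix (Fin d) (Fin d) ℂ) :=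
    @NonUnitalSeminormedRing.toIsTopologicalRing _ ContinuousLinearMap.toNormedRing.toSeminormedRing.toNonUnitalSeminormedRing
  NormedSpace.exp ((t : ℂ) • LinearMap.toContinuousLinearMap L)

/-- `G` is the time average (Cesàro mean) of the semigroup generated by `L`. -/
def IsTimeAverage (L G : Matrix (Fin d) (Fin d) ℂ →ₗ[ℂ] Matrix (Fin d) (Fin d) ℂ) : Prop :=
  ∀ X, Tendsto (fun T : ℝ => T⁻¹ • ∫ t in (0:ℝ)..T, expL L t X) atTop (nhds (G X))

section Aux

set_option maxHeartbeats 1000000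
set_option synthInstance.maxHeartbeats 400000

noncomputable instance instMatNAG : NormedAddCommGroup (Matrix (Fin d) (Fin d) ℂ) :=
  { (Matrix.frobeniusNormedAddCommGroup : NormedAddCommGroup (Matrix (Fin d) (Fin d) ℂ)) with
    toMetricSpace := (Matrix.frobeniusNormedAddCommGroup :
      NormedAddCommGroup (Matrix (Fin d) (Fin d) ℂ)).toMetricSpace.replaceTopology rfl }

noncomputable instance instMatNS : NormedSpace ℂ (Matrix (Fin d) (Fin d) ℂ) :=
  ⟨fun a b => (Matrix.frobeniusNormedSpace : NormedSpace ℂ (Matrix (Fin d) (Fin d) ℂ)).norm_smul_le a b⟩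

noncomputable instance instNAQclm :
    NormedAlgebra ℚ (Matrix (Fin d) (Fin d) ℂ →L[ℂ] Matrix (Fin d) (Fin d) ℂ) :=
  NormedAlgebra.restrictScalars ℚ ℂ _

variable (L G : Matrix (Fin d) (Fin d) ℂ →ₗ[ℂ] Matrix (Fin d) (Fin d) ℂ)
  (X Y : Matrix (Fin d) (Fin d) ℂ)

lemma expL_hasDerivAt (t : ℝ) :
    HasDerivAt (fun s : ℝ => expL L s X) ((expL L t * LinearMap.toContinuousLinearMap L) X) t := by
  have h := hasDerivAt_exp_smul_const (𝕂 := ℂ) (LinearMap.toContinuousLinearMap L) ((t:ℝ):ℂ)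
  have h2 := ((h.hasFDerivAt.restrictScalars ℝ).comp t Complex.ofRealCLM.hasFDerivAt).hasDerivAt
  have h3 : HasDerivAt (fun s : ℝ => NormedSpace.exp ((s:ℂ) • LinearMap.toContinuousLinearMap L))
      (NormedSpace.exp ((t:ℂ) • LinearMap.toContinuousLinearMap L)
        * LinearMap.toContinuousLinearMap L) t := by
    exact h2.congr_deriv (by simp only [ContinuousLinearMap.comp_apply,
      ContinuousLinearMap.coe_restrictScalars', Complex.ofRealCLM_apply, Complex.ofReal_one,
      ContinuousLinearMap.toSpanSingleton_apply, one_smul])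
  have h4 := (hasDerivAt_const (𝕜 := ℝ) t
    ((ContinuousLinearMap.apply ℂ (Matrix (Fin d) (Fin d) ℂ) X).restrictScalars ℝ)).clm_apply h3
  simpa [expL] using h4

lemma expL_continuous : Continuous fun t : ℝ => expL L t X :=
  (NormedSpace.exp_continuous.comp
    (Complex.continuous_ofReal.smul continuous_const)).clm_apply continuous_const

lemma expL_zero : expL L 0 = 1 := by
  have h : ((0:ℝ):ℂ) • LinearMap.toContinuousLinearMap L
      = (0 : Matrix (Fin d) (Fin d) ℂ →L[ℂ] Matrix (Fin d) (Fin d) ℂ) := by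
    rw [Complex.ofReal_zero]
    exact zero_smul ℂ (LinearMap.toContinuousLinearMap L)
  rw [expL, h]
  exact NormedSpace.exp_zero

lemma expL_mul (s t : ℝ) : expL L s * expL L t = expL L (t + s) := by
  set A := LinearMap.toContinuousLinearMap L with hA
  have hsw : ∀ (c e : ℂ), (c • A) * (e • A) = (c * e) • (A * A) := by
    intro c e
    ext v
    simp only [ContinuousLinearMap.mul_apply, ContinuousLinearMap.smul_apply, _root_.map_smul,
      smul_smul, Matrix.smul_apply, smul_eq_mul]
    ring
  have hc : Commute ((s:ℂ) • A) ((t:ℂ) • A) := by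
    have h5 : ((s:ℂ) • A) * ((t:ℂ) • A) = ((t:ℂ) • A) * ((s:ℂ) • A) := by
      rw [hsw, hsw, mul_comm (s:ℂ) (t:ℂ)]
    exact h5
  have key : ((s:ℂ) • A) + (t:ℂ) • A = (((t + s : ℝ)):ℂ) • A := by
    have h1 : (((t + s : ℝ)):ℂ) = (t:ℂ) + (s:ℂ) := by push_cast; ring
    rw [h1]
    exact (add_comm _ _).trans (add_smul _ _ _).symm
  rw [expL, expL, expL, ← NormedSpace.exp_add_of_commute hc, key]

lemma expL_apply_add (s t : ℝ) : expL L s (expL L t X) = expL L (t + s) X := by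
  rw [← ContinuousLinearMap.mul_apply, expL_mul]

variable {L G}

lemma tendsto_shift (hG : IsTimeAverage L G) (s : ℝ) :
    Tendsto (fun T : ℝ => T⁻¹ • ∫ t in (0:ℝ)..T, expL L (t + s) X) atTop (nhds (G X)) := by
  have hf := expL_continuous L X
  have key : ∀ T : ℝ, (∫ t in (0:ℝ)..T, expL L (t + s) X)
      = (∫ t in (0:ℝ)..(T+s), expL L t X) - ∫ t in (0:ℝ)..s, expL L t X := by
    intro T
    rw [intervalIntegral.integral_comp_add_right (fun t => expL L t X) s, zero_add]
    refine eq_sub_iff_add_eq'.mpr ?_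
    exact intervalIntegral.integral_add_adjacent_intervals
      (hf.intervalIntegrable _ _) (hf.intervalIntegrable _ _)
  have h1 : Tendsto (fun T : ℝ => T⁻¹ • (∫ t in (0:ℝ)..(T+s), expL L t X)) atTop (nhds (G X)) := by
    have hmain : Tendsto (fun T : ℝ => (T+s)⁻¹ • ∫ t in (0:ℝ)..(T+s), expL L t X)
        atTop (nhds (G X)) := (hG X).comp (tendsto_atTop_add_const_right atTop s tendsto_id)
    have hcoef : Tendsto (fun T : ℝ => T⁻¹ * (T+s)) atTop (nhds 1) := by
      have h0 : Tendsto (fun T : ℝ => 1 + s * T⁻¹) atTop (nhds (1 + s * 0)) :=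
        (tendsto_const_nhds.add (tendsto_const_nhds.mul tendsto_inv_atTop_zero))
      rw [mul_zero, add_zero] at h0
      refine h0.congr' ?_
      filter_upwards [eventually_gt_atTop 0] with T hT
      field_simp
    have hsm := hcoef.smul hmain
    rw [one_smul] at hsm
    refine hsm.congr' ?_
    filter_upwards [eventually_gt_atTop (max 0 (-s))] with T hT
    have hTs : T + s ≠ 0 := by
      have := lt_of_le_of_lt (le_max_right _ _) hT
      intro hcon
      linarith
    rw [smul_smul, mul_assoc, mul_inv_cancel₀ hTs, mul_one]
  have h2 : Tendsto (fun T : ℝ => T⁻¹ • (∫ t in (0:ℝ)..s, expL L t X)) atTop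
      (nhds ((0:ℝ) • (∫ t in (0:ℝ)..s, expL L t X))) :=
    tendsto_inv_atTop_zero.smul_const _
  rw [zero_smul] at h2
  have h3 := h1.sub h2
  rw [sub_zero] at h3
  refine h3.congr fun T => ?_
  rw [key, smul_sub]

lemma expL_G (hG : IsTimeAverage L G) (s : ℝ) : expL L s (G X) = G X := by
  have h1 : Tendsto (fun T : ℝ => expL L s (T⁻¹ • ∫ t in (0:ℝ)..T, expL L t X)) atTop
      (nhds (expL L s (G X))) := ((expL L s).continuous.tendsto _).comp (hG X)
  have h2 : (fun T : ℝ => expL L s (T⁻¹ • ∫ t in (0:ℝ)..T, expL L t X))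
      = fun T : ℝ => T⁻¹ • ∫ t in (0:ℝ)..T, expL L (t + s) X := by
    funext T
    rw [(expL L s).map_smul_of_tower, ← (expL L s).intervalIntegral_comp_comm
      ((expL_continuous L X).intervalIntegrable _ _)]
    simp only [expL_apply_add]
  rw [h2] at h1
  exact tendsto_nhds_unique h1 (tendsto_shift X hG s)

lemma G_expL (hG : IsTimeAverage L G) (s : ℝ) : G (expL L s X) = G X := by
  have h1 : Tendsto (fun T : ℝ => T⁻¹ • ∫ t in (0:ℝ)..T, expL L t (expL L s X)) atTop
      (nhds (G (expL L s X))) := hG (expL L s X)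
  have h2 : (fun T : ℝ => T⁻¹ • ∫ t in (0:ℝ)..T, expL L t (expL L s X))
      = fun T : ℝ => T⁻¹ • ∫ t in (0:ℝ)..T, expL L (t + s) X := by
    funext T
    congr 1
    refine intervalIntegral.integral_congr fun t _ => ?_
    rw [expL_apply_add L X t s, add_comm]
  rw [h2] at h1
  exact tendsto_nhds_unique h1 (tendsto_shift X hG s)

lemma fixed_G (hG : IsTimeAverage L G) (h : ∀ t : ℝ, expL L t Y = Y) : G Y = Y := by
  have h1 := hG Y
  have h2 : Tendsto (fun T : ℝ => T⁻¹ • ∫ t in (0:ℝ)..T, expL L t Y) atTop (nhds Y) := by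
    have heq : (fun _ : ℝ => Y) =ᶠ[atTop] fun T : ℝ => T⁻¹ • ∫ t in (0:ℝ)..T, expL L t Y := by
      filter_upwards [eventually_gt_atTop 0] with T hT
      simp only [h, intervalIntegral.integral_const, sub_zero, smul_smul,
        inv_mul_cancel₀ (ne_of_gt hT), one_smul]
    exact tendsto_const_nhds.congr' heq
  exact tendsto_nhds_unique h1 h2

lemma ker_fixed (h : L X = 0) (t : ℝ) : expL L t X = X := by
  have hder : ∀ s : ℝ, HasDerivAt (fun u : ℝ => expL L u X) 0 s := by
    intro s
    have h1 := expL_hasDerivAt L X s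
    have h2 : (expL L s * LinearMap.toContinuousLinearMap L) X = 0 := by
      rw [ContinuousLinearMap.mul_apply]
      have : LinearMap.toContinuousLinearMap L X = 0 := by simpa using h
      rw [this, map_zero]
    rwa [h2] at h1
  have hconst : ∀ a b : ℝ, expL L a X = expL L b X := fun a b =>
    is_const_of_deriv_eq_zero (fun x => (hder x).differentiableAt) (fun x => (hder x).deriv) a b
  rw [hconst t 0, expL_zero]
  rfl

lemma LG_zero (hG : IsTimeAverage L G) : L (G X) = 0 := by
  have h1 := expL_hasDerivAt L (G X) 0
  have hconst : (fun s : ℝ => expL L s (G X)) = fun _ => G X := funext fun s => expL_G X hG s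
  rw [hconst] at h1
  have h2 := (hasDerivAt_const (0:ℝ) (G X)).unique h1
  rw [expL_zero, one_mul] at h2
  simpa using h2.symm

lemma GL_zero (hG : IsTimeAverage L G) : G (L X) = 0 := by
  have h1 := expL_hasDerivAt L X 0
  have h2 := (hasDerivAt_const (𝕜 := ℝ) (0:ℝ)
    ((LinearMap.toContinuousLinearMap G).restrictScalars ℝ)).clm_apply h1
  have hconst : (fun s : ℝ => ((LinearMap.toContinuousLinearMap G).restrictScalars ℝ)
      (expL L s X)) = fun _ => G X := by
    funext s
    simpa using G_expL X hG s
  rw [hconst] at h2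
  have h3 := (hasDerivAt_const (0:ℝ) (G X)).unique h2
  rw [expL_zero] at h3
  have h4 : G (L X) = 0 := by simpa using h3.symm
  exact h4

end Aux

set_option maxHeartbeats 1000000 in
theorem stmt8 (d : ℕ) (hd : 1 ≤ d)
    (L G : Matrix (Fin d) (Fin d) ℂ →ₗ[ℂ] Matrix (Fin d) (Fin d) ℂ)
    (hL : IsLindblad L) (hG : IsTimeAverage L G) :
    LinearMap.range L = LinearMap.ker G ∧
    LinearMap.ker L = LinearMap.range G ∧
    IsCompl (LinearMap.ker L) (LinearMap.ker G) ∧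
    Set.BijOn L (LinearMap.ker G : Set (Matrix (Fin d) (Fin d) ℂ))
      (LinearMap.ker G : Set (Matrix (Fin d) (Fin d) ℂ)) := by
  have hLG : ∀ X, L (G X) = 0 := fun X => LG_zero X hG
  have hGL : ∀ X, G (L X) = 0 := fun X => GL_zero X hG
  have hker : ∀ X, L X = 0 → G X = X := fun X h => fixed_G X hG (ker_fixed X h)
  -- ker L = range G
  have hkerL : LinearMap.ker L = LinearMap.range G := by
    ext X
    simp only [LinearMap.mem_ker, LinearMap.mem_range]
    constructor
    · intro h; exact ⟨X, hker X h⟩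
    · rintro ⟨Y, rfl⟩; exact hLG Y
  -- G is idempotent
  have hGG : ∀ X, G (G X) = G X := by
    intro X
    have : L (G X) = 0 := hLG X
    exact hker (G X) this
  -- disjointness of ker L and ker G
  have hdisj : Disjoint (LinearMap.ker L) (LinearMap.ker G) := by
    rw [Submodule.disjoint_def]
    intro x hxL hxG
    have h1 : G x = x := hker x hxL
    rw [LinearMap.mem_ker] at hxG
    rw [hxG] at h1
    exact h1.symm
  -- codisjointness
  have hcodisj : Codisjoint (LinearMap.ker L) (LinearMap.ker G) := by
    rw [codisjoint_iff, eq_top_iff]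
    intro x _
    rw [Submodule.mem_sup]
    refine ⟨G x, ?_, x - G x, ?_, by abel⟩
    · rw [LinearMap.mem_ker]; exact hLG x
    · rw [LinearMap.mem_ker, map_sub, hGG, sub_self]
  have hcompl : IsCompl (LinearMap.ker L) (LinearMap.ker G) := ⟨hdisj, hcodisj⟩
  -- range L = ker G
  have hle : LinearMap.range L ≤ LinearMap.ker G := by
    rintro x ⟨y, rfl⟩
    rw [LinearMap.mem_ker]
    exact hGL y
  have hrankL := LinearMap.finrank_range_add_finrank_ker L
  have hrankG := LinearMap.finrank_range_add_finrank_ker G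
  have hdim : Module.finrank ℂ (LinearMap.ker G) ≤ Module.finrank ℂ (LinearMap.range L) := by
    rw [hkerL] at hrankL
    omega
  have hrangeL : LinearMap.range L = LinearMap.ker G :=
    Submodule.eq_of_le_of_finrank_le hle hdim
  refine ⟨hrangeL, hkerL, hcompl, ?_, ?_, ?_⟩
  · -- MapsTo
    intro x hx
    have : L x ∈ LinearMap.ker G := by rw [LinearMap.mem_ker]; exact hGL x
    exact this
  · -- InjOn
    intro x hx y hy hxy
    have hx' : G x = 0 := hx
    have hy' : G y = 0 := hy
    have hsub : L (x - y) = 0 := by rw [map_sub, hxy, sub_self]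
    have h1 : G (x - y) = x - y := hker _ hsub
    rw [map_sub, hx', hy', sub_self] at h1
    have := h1.symm
    rwa [sub_eq_zero] at this
  · -- SurjOn
    intro y hy
    have hy' : y ∈ LinearMap.range L := by rw [hrangeL]; exact hy
    obtain ⟨x, rfl⟩ := hy'
    refine ⟨x - G x, ?_, ?_⟩
    · have : G (x - G x) = 0 := by rw [map_sub, hGG, sub_self]
      exact this
    · rw [map_sub, hLG, sub_zero]
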